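/- Fix p ∈ [1,2], n ∈ ℕ, and k_1,…,k_m ∈ {1,…,n} such that k_1 + ⋯ + k_m ≤ n. Then for every metric space (X,d_X) and every f : 𝔽₂ⁿ → X one has E_{k_1+⋯+k_m}(f) ≤ BMW_p(X)·m^{1/p − 1/2}·(∑_{j=1}^m E_{k_j}(f)²)^{1/2}. -/

import Mathlib

open scoped ENNReal

/-- `E_k(f) = E_k^{(2)}(f)` for `f : 𝔽₂ⁿ → X`:
`E_k(f)² = (1/(2ⁿ·binom(n,k)))·∑_{|I|=k} ∑_{z ∈ 𝔽₂ⁿ} d_X(f(z+e_I), f(z))²`. -/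
noncomputable def cubeE {n : ℕ} {X : Type*} [PseudoMetricSpace X] (q : ℝ)
    (f : (Fin n → ZMod 2) → X) (k : ℕ) : ℝ :=
  ((∑ I ∈ Finset.univ.filter (fun I : Finset (Fin n) => I.card = k),
      ∑ z : Fin n → ZMod 2,
        dist (f (fun j => z j + if j ∈ I then 1 else 0)) (f z) ^ q) /
    (2 ^ n * (n.choose k : ℝ))) ^ (1 / q)

/-- The BMW (Bourgain–Milman–Wolfson) type `p` constant of a metric space `X`:
the infimum over those `T ∈ (0,∞]` such that for every `n` and every `f : 𝔽₂ⁿ → X`,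
`∑_x d(f(x),f(x+e))² ≤ T²·n^{2/p-1}·∑ᵢ∑_x d(f(x),f(x+eᵢ))²`
(equal to `∞` when no such `T` exists, in which case the conclusion below holds
trivially). -/
noncomputable def bmwConst (X : Type*) [PseudoMetricSpace X] (p : ℝ) : ℝ≥0∞ :=
  sInf {T : ℝ≥0∞ | 0 < T ∧ ∀ (n : ℕ) (f : (Fin n → ZMod 2) → X),
    ENNReal.ofReal (∑ x : Fin n → ZMod 2, dist (f x) (f (fun j => x j + 1)) ^ 2) ≤
      T ^ 2 * (n : ℝ≥0∞) ^ (2 / p - 1) *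
        ENNReal.ofReal (∑ i : Fin n, ∑ x : Fin n → ZMod 2,
          dist (f x) (f (fun j => x j + if j = i then 1 else 0)) ^ 2)}

namespace CubePartitionAux

variable {n : ℕ}

/-- indicator vector of a subset of coordinates -/
def eS (C : Finset (Fin n)) : Fin n → ZMod 2 := fun i => if i ∈ C then 1 else 0

lemma eS_union {C D : Finset (Fin n)} (h : Disjoint C D) : eS (C ∪ D) = eS C + eS D := by
  funext i
  simp only [eS, Pi.add_apply, Finset.mem_union]
  by_cases hC : i ∈ C
  · have hD : i ∉ D := Finset.disjoint_left.1 h hC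
    simp [hC, hD]
  · by_cases hD : i ∈ D <;> simp [hC, hD]

lemma eS_empty : eS (∅ : Finset (Fin n)) = 0 := by
  funext i; simp [eS]

section PMS

variable {X : Type*} [PseudoMetricSpace X]

/-- the summed squared displacement along `e_C` -/
noncomputable def DD (f : (Fin n → ZMod 2) → X) (C : Finset (Fin n)) : ℝ :=
  ∑ z : Fin n → ZMod 2, dist (f (z + eS C)) (f z) ^ 2

lemma DD_nonneg (f : (Fin n → ZMod 2) → X) (C : Finset (Fin n)) : 0 ≤ DD f C :=
  Finset.sum_nonneg fun _ _ => sq_nonneg _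

noncomputable def SS (f : (Fin n → ZMod 2) → X) (k : ℕ) : ℝ :=
  ∑ I ∈ Finset.univ.filter (fun I : Finset (Fin n) => I.card = k), DD f I

lemma SS_nonneg (f : (Fin n → ZMod 2) → X) (k : ℕ) : 0 ≤ SS f k :=
  Finset.sum_nonneg fun _ _ => DD_nonneg f _

lemma cubeE_two (f : (Fin n → ZMod 2) → X) (k : ℕ) :
    cubeE 2 f k = Real.sqrt (SS f k / (2 ^ n * (n.choose k : ℝ))) := by
  have h2 : ∀ x : ℝ, x ^ (2 : ℝ) = x ^ (2 : ℕ) := fun x => by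
    rw [← Real.rpow_natCast x 2]; norm_num
  rw [Real.sqrt_eq_rpow]
  unfold cubeE
  simp only [h2]
  rfl

lemma sq_cubeE_two (f : (Fin n → ZMod 2) → X) (k : ℕ) :
    cubeE 2 f k ^ 2 = SS f k / (2 ^ n * (n.choose k : ℝ)) := by
  rw [cubeE_two, Real.sq_sqrt]
  apply div_nonneg (SS_nonneg f k)
  positivity

end PMS

/-- any finset whose cardinality is `∑ k j` can be partitioned into pieces of
cardinalities `k j`. -/
lemma exists_partition {α : Type*} [DecidableEq α] :
    ∀ (m : ℕ) (k : Fin m → ℕ) (I : Finset α), I.card = ∑ j, k j →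
    ∃ A : Fin m → Finset α, (∀ j, (A j).card = k j) ∧
      (∀ j l, j ≠ l → Disjoint (A j) (A l)) ∧ Finset.univ.biUnion A = I := by
  intro m
  induction m with
  | zero =>
    intro k I hI
    refine ⟨fun j => j.elim0, fun j => j.elim0, fun j => j.elim0, ?_⟩
    simp only [Finset.univ_eq_empty, Finset.biUnion_empty]
    symm
    rw [← Finset.card_eq_zero, hI]
    simp
  | succ m ih =>
    intro k I hI
    have h0 : k 0 ≤ I.card := by
      rw [hI, Fin.sum_univ_succ]; exact Nat.le_add_right _ _
    obtain ⟨A0, hA0sub, hA0card⟩ := Finset.exists_subset_card_eq h0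
    have hcard : (I \ A0).card = ∑ j : Fin m, k j.succ := by
      rw [Finset.card_sdiff_of_subset hA0sub, hI, Fin.sum_univ_succ, hA0card, Nat.add_sub_cancel_left]
    obtain ⟨A', hc', hd', hu'⟩ := ih (fun j => k j.succ) (I \ A0) hcard
    have hsub' : ∀ j, A' j ⊆ I \ A0 := fun j =>
      hu' ▸ Finset.subset_biUnion_of_mem A' (Finset.mem_univ j)
    have hdisj0 : ∀ j, Disjoint A0 (A' j) := fun j =>
      Finset.disjoint_left.2 fun x hx hx' =>
        (Finset.mem_sdiff.1 (hsub' j hx')).2 hx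
    refine ⟨Fin.cases A0 A', ?_, ?_, ?_⟩
    · intro j
      induction j using Fin.cases with
      | zero => simpa using hA0card
      | succ j => simpa using hc' j
    · intro j l hjl
      induction j using Fin.cases with
      | zero =>
        induction l using Fin.cases with
        | zero => exact absurd rfl hjl
        | succ l => simpa using hdisj0 l
      | succ j =>
        induction l using Fin.cases with
        | zero => simpa using (hdisj0 j).symm
        | succ l =>
          have : j ≠ l := fun h => hjl (by rw [h])
          simpa using hd' j l this
    · ext x
      simp only [Finset.mem_biUnion, Finset.mem_univ, true_and]
      constructor
      · rintro ⟨j, hj⟩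
        induction j using Fin.cases with
        | zero => exact hA0sub (by simpa using hj)
        | succ j =>
          have hx : x ∈ I \ A0 := hsub' j (by simpa using hj)
          exact (Finset.mem_sdiff.1 hx).1
      · intro hx
        by_cases hxA : x ∈ A0
        · exact ⟨0, by simpa using hxA⟩
        · have hx' : x ∈ Finset.univ.biUnion A' := by
            rw [hu']; exact Finset.mem_sdiff.2 ⟨hx, hxA⟩
          obtain ⟨j, -, hj⟩ := Finset.mem_biUnion.1 hx'
          exact ⟨j.succ, by simpa using hj⟩

section Chain

variable {X : Type*} [PseudoMetricSpace X]

lemma chain_eq (f : (Fin n → ZMod 2) → X) {m : ℕ} (A : Fin m → Finset (Fin n))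
    (hd : ∀ j l, j ≠ l → Disjoint (A j) (A l))
    (h : ∀ j z, f (z + eS (A j)) = f z) :
    ∀ z, f (z + eS (Finset.univ.biUnion A)) = f z := by
  suffices H : ∀ s : Finset (Fin m), ∀ z, f (z + eS (s.biUnion A)) = f z from H Finset.univ
  intro s
  induction s using Finset.induction_on with
  | empty => intro z; simp [eS_empty]
  | @insert j s hj ih =>
    intro z
    have hdisj : Disjoint (A j) (s.biUnion A) := by
      rw [Finset.disjoint_biUnion_right]
      intro l hl
      exact hd j l (fun h => hj (h ▸ hl))
    rw [Finset.biUnion_insert, eS_union hdisj]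
    calc f (z + (eS (A j) + eS (s.biUnion A)))
        = f ((z + eS (s.biUnion A)) + eS (A j)) := by
          congr 1
          rw [add_comm (eS (A j)) _, ← add_assoc]
      _ = f (z + eS (s.biUnion A)) := h j _
      _ = f z := ih z

end Chain

section Perm

lemma exists_perm_image {C J : Finset (Fin n)} (h : C.card = J.card) :
    ∃ τ : Equiv.Perm (Fin n), C.image τ = J := by
  classical
  let e : {x // x ∈ C} ≃ {x // x ∈ J} := Finset.equivOfCardEq h
  refine ⟨e.extendSubtype, ?_⟩
  apply Finset.eq_of_subset_of_card_le
  · intro x hx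
    obtain ⟨y, hy, rfl⟩ := Finset.mem_image.1 hx
    exact e.extendSubtype_mem y hy
  · rw [Finset.card_image_of_injective _ (Equiv.injective _), ← h]

/-- number of permutations stabilizing `C` (as a set) -/
noncomputable def stab (C : Finset (Fin n)) : ℕ :=
  (Finset.univ.filter (fun σ : Equiv.Perm (Fin n) => C.image ⇑σ = C)).card

lemma fiber_card (C J : Finset (Fin n)) (h : C.card = J.card) :
    (Finset.univ.filter (fun σ : Equiv.Perm (Fin n) => C.image ⇑σ = J)).card = stab C := by
  classical
  obtain ⟨τ, hτ⟩ := exists_perm_image h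
  unfold stab
  apply Finset.card_nbij' (fun σ => τ⁻¹ * σ) (fun σ => τ * σ)
  · intro σ hσ
    simp only [Finset.mem_coe, Finset.mem_filter, Finset.mem_univ, true_and] at hσ ⊢
    rw [Equiv.Perm.coe_mul, ← Finset.image_image, hσ, ← hτ, Finset.image_image]
    simp [Function.comp_def]
  · intro σ hσ
    simp only [Finset.mem_coe, Finset.mem_filter, Finset.mem_univ, true_and] at hσ ⊢
    rw [Equiv.Perm.coe_mul, ← Finset.image_image, hσ, hτ]
  · intro σ _; simp [mul_assoc, ← mul_assoc]
  · intro σ _; simp [← mul_assoc]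

lemma sum_perm_image (F : Finset (Fin n) → ℝ) (C : Finset (Fin n)) :
    ∑ σ : Equiv.Perm (Fin n), F (C.image ⇑σ) =
      (stab C : ℝ) *
        ∑ J ∈ Finset.univ.filter (fun J : Finset (Fin n) => J.card = C.card), F J := by
  classical
  rw [← Finset.sum_fiberwise_of_maps_to
    (g := fun σ : Equiv.Perm (Fin n) => C.image ⇑σ)
    (t := Finset.univ.filter (fun J : Finset (Fin n) => J.card = C.card))
    (h := fun σ _ => by simp [Finset.card_image_of_injective _ (Equiv.injective σ)])
    (f := fun σ => F (C.image ⇑σ)), Finset.mul_sum]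
  apply Finset.sum_congr rfl
  intro J hJ
  have hJc : J.card = C.card := by simpa using hJ
  rw [Finset.sum_congr rfl (fun σ hσ => by
      rw [show C.image ⇑σ = J from (Finset.mem_filter.1 hσ).2]),
    Finset.sum_const, fiber_card C J hJc.symm, nsmul_eq_mul]

lemma stab_mul_choose (C : Finset (Fin n)) : stab C * n.choose C.card = n.factorial := by
  classical
  have h := Finset.card_eq_sum_card_fiberwise
    (f := fun σ : Equiv.Perm (Fin n) => C.image ⇑σ)
    (s := Finset.univ)
    (t := Finset.univ.filter (fun J : Finset (Fin n) => J.card = C.card))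
    (H := fun σ _ => by simp [Finset.card_image_of_injective _ (Equiv.injective σ)])
  rw [Finset.card_univ, Fintype.card_perm, Fintype.card_fin] at h
  rw [Finset.sum_congr rfl (fun J hJ => fiber_card C J ((Finset.mem_filter.1 hJ).2).symm)] at h
  rw [Finset.sum_const, smul_eq_mul] at h
  have hcard : (Finset.univ.filter (fun J : Finset (Fin n) => J.card = C.card)).card
      = n.choose C.card := by
    rw [← Finset.powerset_univ, ← Finset.powersetCard_eq_filter,
      Finset.card_powersetCard, Finset.card_univ, Fintype.card_fin]
  rw [hcard] at h
  rw [mul_comm, ← h]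

end Perm


section Block

variable {X : Type*} [PseudoMetricSpace X]

lemma block_ineq (f : (Fin n → ZMod 2) → X) (R : ℝ) {m : ℕ}
    (hreal : ∀ g : (Fin m → ZMod 2) → X,
      ∑ x : Fin m → ZMod 2, dist (g x) (g (fun j => x j + 1)) ^ 2 ≤
        R * ∑ i : Fin m, ∑ x : Fin m → ZMod 2,
          dist (g x) (g (fun j => x j + if j = i then 1 else 0)) ^ 2)
    (A : Fin m → Finset (Fin n)) (hd : ∀ j l, j ≠ l → Disjoint (A j) (A l)) :
    DD f (Finset.univ.biUnion A) ≤ R * ∑ j, DD f (A j) := by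
  classical
  set c : (Fin m → ZMod 2) → (Fin n → ZMod 2) :=
    fun ε i => ∑ j, if i ∈ A j then ε j else 0 with hc
  have hkey : ∀ ε δ : Fin m → ZMod 2, c (ε + δ) = c ε + c δ := by
    intro ε δ; funext i
    simp only [hc, Pi.add_apply, ← Finset.sum_add_distrib]
    exact Finset.sum_congr rfl fun l _ => by by_cases h : i ∈ A l <;> simp [h]
  have hc1 : c 1 = eS (Finset.univ.biUnion A) := by
    funext i
    simp only [hc, Pi.one_apply, eS]
    by_cases hi : i ∈ Finset.univ.biUnion A
    · obtain ⟨j0, -, hj0⟩ := Finset.mem_biUnion.1 hi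
      rw [if_pos hi, Finset.sum_eq_single j0 (fun l _ hl => by
          rw [if_neg]; exact fun hil => absurd hj0 (Finset.disjoint_left.1 (hd l j0 hl) hil))
        (fun h => absurd (Finset.mem_univ j0) h), if_pos hj0]
    · rw [if_neg hi]
      exact Finset.sum_eq_zero fun l _ => by
        rw [if_neg]; exact fun hil => hi (Finset.mem_biUnion.2 ⟨l, Finset.mem_univ l, hil⟩)
  have hcd : ∀ j : Fin m, c (fun l => if l = j then 1 else 0) = eS (A j) := by
    intro j; funext i
    simp only [hc, eS]
    rw [Finset.sum_eq_single j (fun l _ hl => by simp [hl])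
      (fun h => absurd (Finset.mem_univ j) h)]
    simp
  have key : ∀ D : Finset (Fin n),
      ∑ z : Fin n → ZMod 2, ∑ x : Fin m → ZMod 2,
        dist (f (z + c x)) (f (z + c x + eS D)) ^ 2
      = (Fintype.card (Fin m → ZMod 2) : ℝ) * DD f D := by
    intro D
    rw [Finset.sum_comm]
    have h1 : ∀ x : Fin m → ZMod 2,
        ∑ z : Fin n → ZMod 2, dist (f (z + c x)) (f (z + c x + eS D)) ^ 2 = DD f D := by
      intro x
      show _ = ∑ w : Fin n → ZMod 2, dist (f (w + eS D)) (f w) ^ 2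
      refine Fintype.sum_equiv (Equiv.addRight (c x)) _ _ fun z => ?_
      simp only [Equiv.coe_addRight]
      rw [dist_comm]
    simp only [h1]
    rw [Finset.sum_const, Finset.card_univ, nsmul_eq_mul]
  have hmain := Finset.sum_le_sum (s := (Finset.univ : Finset (Fin n → ZMod 2)))
    (fun z _ => hreal (fun ε => f (z + c ε)))
  have e1 : ∀ x : Fin m → ZMod 2,
      c (fun j => x j + 1) = c x + eS (Finset.univ.biUnion A) := fun x => by
    rw [show (fun j => x j + (1 : ZMod 2)) = x + 1 from rfl, hkey, hc1]
  have e2 : ∀ (i : Fin m) (x : Fin m → ZMod 2),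
      c (fun j => x j + if j = i then 1 else 0) = c x + eS (A i) := fun i x => by
    rw [show (fun j => x j + if j = i then (1 : ZMod 2) else 0)
        = x + (fun j => if j = i then 1 else 0) from rfl, hkey, hcd]
  simp only [e1, e2, ← add_assoc] at hmain
  rw [key, ← Finset.mul_sum, Finset.sum_comm] at hmain
  simp only [key] at hmain
  rw [← Finset.mul_sum, mul_left_comm] at hmain
  have hN : (0 : ℝ) < (Fintype.card (Fin m → ZMod 2) : ℝ) := by
    exact_mod_cast Fintype.card_pos
  exact le_of_mul_le_mul_left hmain hN

lemma DD_eq_zero_of_eq {f : (Fin n → ZMod 2) → X} {C : Finset (Fin n)}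
    (h : ∀ z, f (z + eS C) = f z) : DD f C = 0 :=
  Finset.sum_eq_zero fun z _ => by rw [h z, dist_self]; norm_num

end Block

section ZeroCase

variable {X : Type*} [MetricSpace X]

lemma eq_of_DD_eq_zero {f : (Fin n → ZMod 2) → X} {C : Finset (Fin n)}
    (h : DD f C = 0) : ∀ z, f (z + eS C) = f z := by
  intro z
  have h0 : ∀ w ∈ (Finset.univ : Finset (Fin n → ZMod 2)),
      (0:ℝ) ≤ dist (f (w + eS C)) (f w) ^ 2 := fun w _ => sq_nonneg _
  have := (Finset.sum_eq_zero_iff_of_nonneg h0).1 h z (Finset.mem_univ z)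
  have hd : dist (f (z + eS C)) (f z) = 0 := by
    have := sq_eq_zero_iff.1 this
    exact this
  exact dist_eq_zero.1 hd

lemma cubeE_zero_of_all_zero (f : (Fin n → ZMod 2) → X) {m : ℕ}
    (k : Fin m → ℕ) (hkn : ∀ j, k j ≤ n)
    (h : ∀ j, cubeE 2 f (k j) = 0) :
    cubeE 2 f (∑ j, k j) = 0 := by
  classical
  have hDD : ∀ (j : Fin m) (J : Finset (Fin n)), J.card = k j → DD f J = 0 := by
    intro j J hJ
    have hpos : (0:ℝ) < 2 ^ n * (n.choose (k j) : ℝ) := by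
      have := Nat.choose_pos (hkn j)
      positivity
    have hS : SS f (k j) = 0 := by
      have h0 := h j
      rw [cubeE_two, Real.sqrt_eq_zero'] at h0
      have hqq : SS f (k j) / (2 ^ n * (n.choose (k j) : ℝ)) * (2 ^ n * (n.choose (k j) : ℝ))
          = SS f (k j) := div_mul_cancel₀ _ hpos.ne'
      have hle : SS f (k j) ≤ 0 := by
        rw [← hqq]
        exact mul_nonpos_iff.2 (Or.inr ⟨h0, hpos.le⟩)
      exact le_antisymm hle (SS_nonneg f _)
    exact (Finset.sum_eq_zero_iff_of_nonneg (fun I _ => DD_nonneg f I)).1 hS J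
      (Finset.mem_filter.2 ⟨Finset.mem_univ J, hJ⟩)
  have hSK : SS f (∑ j, k j) = 0 := by
    apply Finset.sum_eq_zero
    intro I hI
    have hIc : I.card = ∑ j, k j := (Finset.mem_filter.1 hI).2
    obtain ⟨A, hAc, hAd, hAu⟩ := exists_partition m k I hIc
    apply DD_eq_zero_of_eq
    rw [← hAu]
    exact chain_eq f A hAd (fun j z => eq_of_DD_eq_zero (hDD j (A j) (hAc j)) z)
  rw [cubeE_two, hSK]
  simp

end ZeroCase

end CubePartitionAux

theorem cubeE_partition_bound (p : ℝ) (hp1 : 1 ≤ p) (hp2 : p ≤ 2) {n m : ℕ}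
    (k : Fin m → ℕ) (hk : ∀ j, 1 ≤ k j ∧ k j ≤ n) (hsum : ∑ j, k j ≤ n)
    (X : Type*) [MetricSpace X] (f : (Fin n → ZMod 2) → X) :
    ENNReal.ofReal (cubeE 2 f (∑ j, k j)) ≤
      bmwConst X p *
        ENNReal.ofReal ((m : ℝ) ^ (1 / p - 1 / 2) *
          Real.sqrt (∑ j, cubeE 2 f (k j) ^ 2)) := by
  classical
  open CubePartitionAux in
  by_cases hr : (m : ℝ) ^ (1 / p - 1 / 2) * Real.sqrt (∑ j, cubeE 2 f (k j) ^ 2) ≤ 0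
  · -- degenerate case : the right-hand side real factor is zero
    have hE : cubeE 2 f (∑ j, k j) = 0 := by
      rcases Nat.eq_zero_or_pos m with hm | hm
      · subst hm
        exact cubeE_zero_of_all_zero f k (fun j => (hk j).2) (fun j => j.elim0)
      · have hmp : (0:ℝ) < (m:ℝ) ^ (1/p - 1/2) :=
          Real.rpow_pos_of_pos (by exact_mod_cast hm) _
        have hnn : 0 ≤ Real.sqrt (∑ j, cubeE 2 f (k j) ^ 2) := Real.sqrt_nonneg _
        have hle : Real.sqrt (∑ j, cubeE 2 f (k j) ^ 2) ≤ 0 := by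
          have h' : (m:ℝ) ^ (1/p - 1/2) * Real.sqrt (∑ j, cubeE 2 f (k j) ^ 2)
              ≤ (m:ℝ) ^ (1/p - 1/2) * 0 := by simpa using hr
          exact le_of_mul_le_mul_left h' hmp
        have hsq : Real.sqrt (∑ j, cubeE 2 f (k j) ^ 2) = 0 := le_antisymm hle hnn
        have hsum0 : ∑ j, cubeE 2 f (k j) ^ 2 = 0 := by
          have h1 := Real.sqrt_eq_zero'.1 hsq
          have h2 : 0 ≤ ∑ j, cubeE 2 f (k j) ^ 2 :=
            Finset.sum_nonneg fun _ _ => sq_nonneg _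
          linarith
        have hz : ∀ j, cubeE 2 f (k j) = 0 := fun j =>
          sq_eq_zero_iff.1 ((Finset.sum_eq_zero_iff_of_nonneg
            (fun j _ => sq_nonneg (cubeE 2 f (k j)))).1 hsum0 j (Finset.mem_univ j))
        exact cubeE_zero_of_all_zero f k (fun j => (hk j).2) hz
    rw [hE]
    simp
  · push_neg at hr
    have hm : 0 < m := by
      by_contra hm0
      have : m = 0 := by omega
      subst this
      simp at hr
    set r := (m : ℝ) ^ (1 / p - 1 / 2) * Real.sqrt (∑ j, cubeE 2 f (k j) ^ 2) with hrdef
    have hc0 : ENNReal.ofReal r ≠ 0 := (ENNReal.ofReal_pos.2 hr).ne'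
    have hctop : ENNReal.ofReal r ≠ ⊤ := ENNReal.ofReal_ne_top
    have hm0 : (0:ℝ) < (m:ℝ) := by exact_mod_cast hm
    have hp0 : (0:ℝ) < p := lt_of_lt_of_le one_pos hp1
    have hexp : 0 ≤ 2 / p - 1 := by
      rw [sub_nonneg, le_div_iff₀ hp0, one_mul]
      exact hp2
    have hdiv : ENNReal.ofReal (cubeE 2 f (∑ j, k j)) / ENNReal.ofReal r ≤ bmwConst X p := by
      unfold bmwConst
      apply le_sInf
      rintro T ⟨hT0, hT⟩
      rw [ENNReal.div_le_iff_le_mul (Or.inl hc0) (Or.inl hctop)]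
      rcases eq_or_ne T ⊤ with rfl | hTtop
      · rw [ENNReal.top_mul hc0]; exact le_top
      set Tr := T.toReal with hTrdef
      have hTrnn : 0 ≤ Tr := ENNReal.toReal_nonneg
      set R := Tr ^ 2 * (m:ℝ) ^ (2/p - 1) with hRdef
      have hRnn : 0 ≤ R := by
        apply mul_nonneg (sq_nonneg _) (Real.rpow_nonneg hm0.le _)
      have hreal : ∀ g : (Fin m → ZMod 2) → X,
          ∑ x : Fin m → ZMod 2, dist (g x) (g fun j => x j + 1) ^ 2 ≤
            R * ∑ i : Fin m, ∑ x : Fin m → ZMod 2,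
              dist (g x) (g fun j => x j + if j = i then 1 else 0) ^ 2 := by
        intro g
        have hg := hT m g
        have hedge : (0:ℝ) ≤ ∑ i : Fin m, ∑ x : Fin m → ZMod 2,
            dist (g x) (g fun j => x j + if j = i then 1 else 0) ^ 2 :=
          Finset.sum_nonneg fun _ _ => Finset.sum_nonneg fun _ _ => sq_nonneg _
        have hRtop : T ^ 2 * (m : ℝ≥0∞) ^ (2/p-1) *
            ENNReal.ofReal (∑ i : Fin m, ∑ x : Fin m → ZMod 2,
              dist (g x) (g fun j => x j + if j = i then 1 else 0) ^ 2) ≠ ⊤ :=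
          ENNReal.mul_ne_top (ENNReal.mul_ne_top (ENNReal.pow_ne_top hTtop)
            (ENNReal.rpow_ne_top_of_nonneg hexp (ENNReal.natCast_ne_top m)))
            ENNReal.ofReal_ne_top
        have h2 := (ENNReal.ofReal_le_iff_le_toReal hRtop).1 hg
        rwa [ENNReal.toReal_mul, ENNReal.toReal_mul, ENNReal.toReal_pow,
          ← ENNReal.toReal_rpow, ENNReal.toReal_natCast,
          ENNReal.toReal_ofReal hedge] at h2
      -- choose a base set of cardinality `∑ k j` and its partition into blocks
      obtain ⟨C, -, hCc⟩ := Finset.exists_subset_card_eq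
        (show ∑ j, k j ≤ (Finset.univ : Finset (Fin n)).card by simpa using hsum)
      obtain ⟨B, hBc, hBd, hBu⟩ := exists_partition m k C hCc
      have hper : ∀ σ : Equiv.Perm (Fin n),
          DD f (C.image ⇑σ) ≤ R * ∑ j, DD f ((B j).image ⇑σ) := by
        intro σ
        have hd : ∀ j l, j ≠ l → Disjoint ((B j).image ⇑σ) ((B l).image ⇑σ) := fun j l hjl =>
          (Finset.disjoint_image (Equiv.injective σ)).2 (hBd j l hjl)
        have hb := block_ineq f R hreal (fun j => (B j).image ⇑σ) hd
        rwa [show Finset.univ.biUnion (fun j => (B j).image ⇑σ) = C.image ⇑σ by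
          rw [← Finset.biUnion_image, hBu]] at hb
      have hsumσ : ∑ σ : Equiv.Perm (Fin n), DD f (C.image ⇑σ) ≤
          ∑ σ : Equiv.Perm (Fin n), R * ∑ j, DD f ((B j).image ⇑σ) :=
        Finset.sum_le_sum fun σ _ => hper σ
      have hL : ∑ σ : Equiv.Perm (Fin n), DD f (C.image ⇑σ)
          = (stab C : ℝ) * SS f (∑ j, k j) := by
        rw [sum_perm_image (DD f) C, hCc]; rfl
      have hR2 : ∀ j, ∑ σ : Equiv.Perm (Fin n), DD f ((B j).image ⇑σ)
          = (stab (B j) : ℝ) * SS f (k j) := fun j => by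
        rw [sum_perm_image (DD f) (B j), hBc j]; rfl
      rw [hL, ← Finset.mul_sum, Finset.sum_comm] at hsumσ
      rw [Finset.sum_congr rfl (fun j _ => hR2 j)] at hsumσ
      -- counting constants
      have hfac : (0:ℝ) < n.factorial := by exact_mod_cast Nat.factorial_pos n
      have hchK : (0:ℝ) < n.choose (∑ j, k j) := by exact_mod_cast Nat.choose_pos hsum
      have hchB : ∀ j, (0:ℝ) < n.choose (k j) := fun j => by
        exact_mod_cast Nat.choose_pos (hk j).2
      have hstabC : (stab C : ℝ) * (n.choose (∑ j, k j) : ℝ) = n.factorial := by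
        have := stab_mul_choose C
        rw [hCc] at this
        exact_mod_cast this
      have hstabB : ∀ j, (stab (B j) : ℝ) * (n.choose (k j) : ℝ) = n.factorial := fun j => by
        have := stab_mul_choose (B j)
        rw [hBc j] at this
        exact_mod_cast this
      have hgen : ∀ a S ch : ℝ, a * ch = (n.factorial : ℝ) →
          a * S / (n.factorial : ℝ) = S / ch := by
        intro a S ch hach
        have ha : a ≠ 0 := by
          intro h0
          rw [h0, zero_mul] at hach
          exact hfac.ne hach
        rw [← hach, mul_div_mul_left _ _ ha]
      have hkey2 : SS f (∑ j, k j) / (n.choose (∑ j, k j) : ℝ)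
          ≤ R * ∑ j, SS f (k j) / (n.choose (k j) : ℝ) := by
        calc SS f (∑ j, k j) / (n.choose (∑ j, k j) : ℝ)
            = (stab C : ℝ) * SS f (∑ j, k j) / (n.factorial : ℝ) :=
              (hgen _ _ _ hstabC).symm
          _ ≤ (R * ∑ j, (stab (B j) : ℝ) * SS f (k j)) / (n.factorial : ℝ) := by
              gcongr
          _ = R * ∑ j, (stab (B j) : ℝ) * SS f (k j) / (n.factorial : ℝ) := by
              rw [mul_div_assoc, Finset.sum_div]
          _ = R * ∑ j, SS f (k j) / (n.choose (k j) : ℝ) := by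
              exact congrArg _ (Finset.sum_congr rfl fun j _ => hgen _ _ _ (hstabB j))
      have hstep : cubeE 2 f (∑ j, k j) ^ 2 ≤ R * ∑ j, cubeE 2 f (k j) ^ 2 := by
        rw [sq_cubeE_two]
        have h2n : (0:ℝ) < (2:ℝ) ^ n := by positivity
        calc SS f (∑ j, k j) / (2 ^ n * (n.choose (∑ j, k j) : ℝ))
            = (SS f (∑ j, k j) / (n.choose (∑ j, k j) : ℝ)) / 2 ^ n := by
              rw [div_div, mul_comm]
          _ ≤ (R * ∑ j, SS f (k j) / (n.choose (k j) : ℝ)) / 2 ^ n := by gcongr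
          _ = R * ∑ j, SS f (k j) / (2 ^ n * (n.choose (k j) : ℝ)) := by
              rw [mul_div_assoc, Finset.sum_div]
              exact congrArg _ (Finset.sum_congr rfl fun j _ => by rw [div_div, mul_comm])
          _ = R * ∑ j, cubeE 2 f (k j) ^ 2 :=
              congrArg _ (Finset.sum_congr rfl fun j _ => (sq_cubeE_two f (k j)).symm)
      have hKnn : 0 ≤ cubeE 2 f (∑ j, k j) := by
        rw [cubeE_two]; exact Real.sqrt_nonneg _
      have hsnn : 0 ≤ ∑ j, cubeE 2 f (k j) ^ 2 :=
        Finset.sum_nonneg fun _ _ => sq_nonneg _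
      have hfinal : cubeE 2 f (∑ j, k j) ≤ Tr * r := by
        have h1 : cubeE 2 f (∑ j, k j) ≤ Real.sqrt (R * ∑ j, cubeE 2 f (k j) ^ 2) :=
          (Real.le_sqrt hKnn (mul_nonneg hRnn hsnn)).2 hstep
        have hsqR : Real.sqrt R = Tr * (m:ℝ) ^ (1/p - 1/2) := by
          have hmm : (m:ℝ) ^ (2/p - 1) = ((m:ℝ) ^ (1/p - 1/2)) ^ (2:ℕ) := by
            rw [← Real.rpow_natCast ((m:ℝ) ^ (1/p - 1/2)) 2, ← Real.rpow_mul hm0.le]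
            congr 1
            push_cast
            ring
          rw [hRdef, hmm, Real.sqrt_mul (sq_nonneg _), Real.sqrt_sq hTrnn,
            Real.sqrt_sq (Real.rpow_nonneg hm0.le _)]
        calc cubeE 2 f (∑ j, k j)
            ≤ Real.sqrt (R * ∑ j, cubeE 2 f (k j) ^ 2) := h1
          _ = Real.sqrt R * Real.sqrt (∑ j, cubeE 2 f (k j) ^ 2) := Real.sqrt_mul hRnn _
          _ = Tr * r := by rw [hsqR, hrdef, mul_assoc]
      calc ENNReal.ofReal (cubeE 2 f (∑ j, k j))
          ≤ ENNReal.ofReal (Tr * r) := ENNReal.ofReal_le_ofReal hfinal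
        _ = ENNReal.ofReal Tr * ENNReal.ofReal r := ENNReal.ofReal_mul hTrnn
        _ = T * ENNReal.ofReal r := by rw [hTrdef, ENNReal.ofReal_toReal hTtop]
    calc ENNReal.ofReal (cubeE 2 f (∑ j, k j))
        = ENNReal.ofReal (cubeE 2 f (∑ j, k j)) / ENNReal.ofReal r * ENNReal.ofReal r :=
          (ENNReal.div_mul_cancel hc0 hctop).symm
      _ ≤ bmwConst X p * ENNReal.ofReal r := mul_le_mul_left hdiv _
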